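/- arXiv:1912.05089 — 2 statements merged into one kernel-verified Lean document; each statement's English description precedes it below -/
import Mathlib

section
/- Fix d ≥ 2 and let V_d denote the ℂ-vector space of homogeneous polynomials of degree d in ℂ[X,Y,Z]. In the projectivization ℙ(V_d) of V_d, equipped with the quotient of the natural (Euclidean) topology on V_d ∖ {0}, the set of classes [f] such that f factors as a product f = g·h of two homogeneous polynomials g, h of positive degrees is closed. Consequently, the set of classes of irreducible homogeneous polynomials of degree d is open in ℙ(V_d). -/
open MvPolynomial

/-- `Vd d` is the ℂ-vector space of homogeneous polynomials of total degree `d`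
in `ℂ[X,Y,Z]`. -/
noncomputable abbrev Vd (d : ℕ) : Type :=
  MvPolynomial.homogeneousSubmodule (Fin 3) ℂ d

/-- The Euclidean topology on the finite-dimensional complex vector space `Vd d`:
the topology induced by the (injective, linear) coefficient map into the product
`(Fin 3 →₀ ℕ) → ℂ`.  Since `Vd d` is finite-dimensional and the coefficient map is
a linear injection into a Hausdorff topological vector space, this is the standard
Euclidean topology of `Vd d`. -/
noncomputable instance (d : ℕ) : TopologicalSpace (Vd d) :=
  TopologicalSpace.induced
    (fun p => fun m => (p : MvPolynomial (Fin 3) ℂ).coeff m : Vd d → (Fin 3 →₀ ℕ) → ℂ)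
    inferInstance

/-- The quotient topology on the projectivization of `Vd d`. -/
noncomputable instance (d : ℕ) : TopologicalSpace (Projectivization ℂ (Vd d)) :=
  TopologicalSpace.coinduced (Projectivization.mk' ℂ) inferInstance

namespace AuxStmt3

/-! ### Topological vector space structure on `Vd d` -/

noncomputable def coeffMap (d : ℕ) : Vd d →ₗ[ℂ] ((Fin 3 →₀ ℕ) → ℂ) :=
  (LinearMap.pi fun m => MvPolynomial.lcoeff ℂ m).comp (Submodule.subtype _)

lemma coeffMap_inducing (d : ℕ) : Topology.IsInducing (coeffMap d) := ⟨rfl⟩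

lemma coeffMap_injective (d : ℕ) : Function.Injective (coeffMap d) := by
  intro p q h
  ext m
  exact congrFun h m

instance (d : ℕ) : IsTopologicalAddGroup (Vd d) := topologicalAddGroup_induced (coeffMap d)

instance (d : ℕ) : ContinuousSMul ℂ (Vd d) := ContinuousSMul.induced (coeffMap d)

instance (d : ℕ) : T2Space (Vd d) :=
  (Topology.IsEmbedding.mk (coeffMap_inducing d) (coeffMap_injective d)).t2Space

instance (d : ℕ) : FiniteDimensional ℂ (Vd d) := by
  have h : homogeneousSubmodule (Fin 3) ℂ d ≤ restrictTotalDegree (Fin 3) ℂ d := by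
    intro p hp
    rw [mem_restrictTotalDegree]
    exact ((mem_homogeneousSubmodule _ _).mp hp).totalDegree_le
  exact Submodule.finiteDimensional_of_le h

instance (d : ℕ) : Nontrivial (Vd d) := by
  refine ⟨⟨(X 0 : MvPolynomial (Fin 3) ℂ) ^ d,
    (mem_homogeneousSubmodule _ _).mpr (isHomogeneous_X_pow 0 d)⟩, 0, ?_⟩
  intro h
  have := congrArg (Subtype.val) h
  exact pow_ne_zero d (X_ne_zero (R := ℂ) (0 : Fin 3)) (by simpa using this)

/-- The continuous linear equivalence of `Vd n` with a standard model space. -/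
noncomputable def modelEquiv (n : ℕ) :
    Vd n ≃L[ℂ] (Fin (Module.finrank ℂ (Vd n)) → ℂ) :=
  LinearEquiv.toContinuousLinearEquiv (Module.finBasis ℂ (Vd n)).equivFun

/-! ### The abstract closedness lemma for images of bilinear maps -/

open Metric in
theorem closed_image_bilinear {E₁ E₂ F : Type*}
    [NormedAddCommGroup E₁] [NormedSpace ℂ E₁] [FiniteDimensional ℂ E₁]
    [NormedAddCommGroup E₂] [NormedSpace ℂ E₂] [FiniteDimensional ℂ E₂]
    [NormedAddCommGroup F] [NormedSpace ℂ F] [FiniteDimensional ℂ F]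
    (B : E₁ →ₗ[ℂ] E₂ →ₗ[ℂ] F)
    (hB : ∀ x y, B x y = 0 → x = 0 ∨ y = 0)
    [Nontrivial E₁] [Nontrivial E₂] :
    IsClosed {z : F | ∃ x y, B x y = z} := by
  haveI : ProperSpace E₁ := FiniteDimensional.proper ℂ E₁
  haveI : ProperSpace E₂ := FiniteDimensional.proper ℂ E₂
  have hBc : Continuous fun p : E₁ × E₂ => B p.1 p.2 := by
    let B' : E₁ →ₗ[ℂ] (E₂ →L[ℂ] F) :=
      { toFun := fun x => LinearMap.toContinuousLinearMap (B x)
        map_add' := by intro x y; ext z; simp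
        map_smul' := by intro c x; ext z; simp }
    let L : E₁ →L[ℂ] (E₂ →L[ℂ] F) := LinearMap.toContinuousLinearMap B'
    have : (fun p : E₁ × E₂ => B p.1 p.2) = fun p => L p.1 p.2 := rfl
    rw [this]
    exact L.continuous₂
  set K : Set F := (fun p : E₁ × E₂ => B p.1 p.2) '' (sphere (0:E₁) 1 ×ˢ sphere (0:E₂) 1) with hK
  have hKc : IsCompact K := ((isCompact_sphere _ _).prod (isCompact_sphere _ _)).image hBc
  have hKne : K.Nonempty := by
    obtain ⟨x, hx⟩ := (NormedSpace.sphere_nonempty (x := (0:E₁)) (r := 1)).mpr zero_le_one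
    obtain ⟨y, hy⟩ := (NormedSpace.sphere_nonempty (x := (0:E₂)) (r := 1)).mpr zero_le_one
    exact ⟨B x y, ⟨(x,y), ⟨hx, hy⟩, rfl⟩⟩
  have hK0 : (0:F) ∉ K := by
    rintro ⟨⟨x, y⟩, ⟨hx, hy⟩, hxy⟩
    rcases hB x y hxy with rfl | rfl
    · simp at hx
    · simp at hy
  obtain ⟨k₀, hk₀K, hk₀min⟩ := hKc.exists_isMinOn hKne (continuous_norm.continuousOn)
  set δ : ℝ := ‖k₀‖ with hδ
  have hδpos : 0 < δ := norm_pos_iff.mpr (fun h => hK0 (h ▸ hk₀K))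
  have hδle : ∀ k ∈ K, δ ≤ ‖k‖ := fun k hk => hk₀min hk
  have himg : {z : F | ∃ x y, B x y = z} = {z : F | ∃ c : ℂ, ∃ k ∈ K, c • k = z} := by
    ext z
    constructor
    · rintro ⟨x, y, rfl⟩
      by_cases hx : x = 0
      · exact ⟨0, k₀, hk₀K, by simp [hx]⟩
      by_cases hy : y = 0
      · exact ⟨0, k₀, hk₀K, by simp [hy]⟩
      refine ⟨(‖x‖ * ‖y‖ : ℝ), B ((‖x‖:ℂ)⁻¹ • x) ((‖y‖:ℂ)⁻¹ • y), ⟨((‖x‖:ℂ)⁻¹ • x, (‖y‖:ℂ)⁻¹ • y),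
        ⟨?_, ?_⟩, rfl⟩, ?_⟩
      · simp [norm_smul, norm_inv, inv_mul_cancel₀ (norm_ne_zero_iff.mpr hx)]
      · simp [norm_smul, norm_inv, inv_mul_cancel₀ (norm_ne_zero_iff.mpr hy)]
      · rw [map_smul, map_smul, LinearMap.smul_apply, smul_smul, smul_smul]
        have hx' : (‖x‖:ℂ) ≠ 0 := by exact_mod_cast norm_ne_zero_iff.mpr hx
        have hy' : (‖y‖:ℂ) ≠ 0 := by exact_mod_cast norm_ne_zero_iff.mpr hy
        suffices h : (((‖x‖ * ‖y‖ : ℝ) : ℂ) * (‖y‖:ℂ)⁻¹ * (‖x‖:ℂ)⁻¹ : ℂ) = 1 by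
          rw [h, one_smul]
        push_cast
        field_simp
    · rintro ⟨c, k, ⟨⟨x, y⟩, ⟨hx, hy⟩, rfl⟩, rfl⟩
      exact ⟨c • x, y, by simp⟩
  rw [himg]
  rw [← isOpen_compl_iff]
  rw [isOpen_iff_mem_nhds]
  intro z hz
  by_contra hcon
  have hzcl : z ∈ closure {z : F | ∃ c : ℂ, ∃ k ∈ K, c • k = z} := by
    rw [mem_closure_iff_nhds]
    intro t ht
    by_contra h2
    rw [Set.not_nonempty_iff_eq_empty] at h2
    exact hcon (Filter.mem_of_superset ht (by
      intro w hw
      simp only [Set.mem_compl_iff, Set.mem_setOf_eq]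
      intro hw2
      exact absurd (Set.mem_inter (b := {z : F | ∃ c : ℂ, ∃ k ∈ K, c • k = z}) hw hw2) (h2 ▸ Set.notMem_empty w)))
  apply hz
  set R : ℝ := ‖z‖ + 1 with hR
  set T' : Set F := (fun p : ℂ × F => p.1 • p.2) '' (closedBall (0:ℂ) (R/δ) ×ˢ K) with hT'
  have hT'c : IsCompact T' := ((isCompact_closedBall _ _).prod hKc).image continuous_smul
  have hsub : {z : F | ∃ c : ℂ, ∃ k ∈ K, c • k = z} ∩ ball (0:F) R ⊆ T' := by
    rintro w ⟨⟨c, k, hk, rfl⟩, hw⟩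
    refine ⟨(c, k), ⟨?_, hk⟩, rfl⟩
    rw [mem_closedBall_zero_iff]
    have h1 : ‖c • k‖ ≤ R := le_of_lt (by simpa using hw)
    rw [norm_smul] at h1
    have h2 : δ ≤ ‖k‖ := hδle k hk
    rw [le_div_iff₀ hδpos]
    calc ‖c‖ * δ ≤ ‖c‖ * ‖k‖ := mul_le_mul_of_nonneg_left h2 (norm_nonneg _)
      _ ≤ R := h1
  have hzT' : z ∈ T' := by
    have : z ∈ closure ({z : F | ∃ c : ℂ, ∃ k ∈ K, c • k = z} ∩ ball (0:F) R) := by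
      rw [mem_closure_iff_nhds] at hzcl ⊢
      intro t ht
      have ht2 : t ∩ ball (0:F) R ∈ nhds z := by
        apply Filter.inter_mem ht
        exact isOpen_ball.mem_nhds (mem_ball_zero_iff.mpr (by rw [hR]; linarith))
      obtain ⟨w, hw1, hw2⟩ := hzcl _ ht2
      exact ⟨w, hw1.1, hw2, hw1.2⟩
    have := closure_mono hsub this
    rwa [hT'c.isClosed.closure_eq] at this
  obtain ⟨⟨c, k⟩, ⟨_, hk⟩, rfl⟩ := hzT'
  exact ⟨c, k, hk, rfl⟩

/-! ### Homogeneity of factors -/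
set_option linter.unusedSectionVars false
section Alg

variable {σ : Type*} {R : Type*} [CommRing R] [IsDomain R]

open Finsupp in
lemma mem_support_mul' (p q : MvPolynomial σ R) {d : σ →₀ ℕ} (hd : d ∈ (p * q).support) :
    ∃ e ∈ p.support, ∃ e' ∈ q.support, d = e + e' := by
  classical
  have := MvPolynomial.support_mul p q hd
  rw [Finset.mem_add] at this
  obtain ⟨e, he, e', he', h⟩ := this
  exact ⟨e, he, e', he', h.symm⟩

open Finsupp in
lemma Finsupp.degree_add' (a b : σ →₀ ℕ) : (a + b).degree = a.degree + b.degree := by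
  simp [degree_eq_weight_one, map_add]

lemma hcZeroLow (p q : MvPolynomial σ R) (m m' : ℕ)
    (hp : ∀ d ∈ p.support, m ≤ d.degree) (hq : ∀ d ∈ q.support, m' < d.degree) :
    homogeneousComponent (m + m') (p * q) = 0 := by
  apply homogeneousComponent_eq_zero'
  intro d hd
  obtain ⟨e, he, e', he', rfl⟩ := mem_support_mul' p q hd
  have h1 := hp e he
  have h2 := hq e' he'
  rw [Finsupp.degree_add']
  omega

lemma hcZeroHigh (p q : MvPolynomial σ R) (m m' : ℕ)
    (hp : ∀ d ∈ p.support, d.degree ≤ m) (hq : ∀ d ∈ q.support, d.degree < m') :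
    homogeneousComponent (m + m') (p * q) = 0 := by
  apply homogeneousComponent_eq_zero'
  intro d hd
  obtain ⟨e, he, e', he', rfl⟩ := mem_support_mul' p q hd
  have h1 := hp e he
  have h2 := hq e' he'
  rw [Finsupp.degree_add']
  omega

lemma supp_hc_deg (p : MvPolynomial σ R) (k : ℕ) {d : σ →₀ ℕ}
    (hd : d ∈ (homogeneousComponent k p).support) : d.degree = k := by
  by_contra hne
  have := (homogeneousComponent_isHomogeneous k p).coeff_eq_zero hne
  rw [mem_support_iff] at hd
  exact hd this

/-- The key extremal-components lemma. -/
lemma hc_extreme {a b : MvPolynomial σ R} (ma mb : ℕ)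
    (hma : ∀ d ∈ a.support, ma ≤ d.degree) (hmb : ∀ d ∈ b.support, mb ≤ d.degree) :
    homogeneousComponent (ma + mb) (a * b) =
      homogeneousComponent ma a * homogeneousComponent mb b := by
  set u := homogeneousComponent ma a with hu
  set v := homogeneousComponent mb b with hv
  set s := a - u with hs
  set t := b - v with ht
  have hsupp_s : ∀ d ∈ s.support, ma < d.degree := by
    intro d hd
    rw [mem_support_iff, hs, coeff_sub, hu, coeff_homogeneousComponent] at hd
    by_cases hdeg : d.degree = ma
    · rw [if_pos hdeg] at hd; simp at hd
    · rw [if_neg hdeg] at hd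
      have hda : d ∈ a.support := by
        rw [mem_support_iff]; intro h0; rw [h0] at hd; simp at hd
      exact lt_of_le_of_ne (hma d hda) (Ne.symm hdeg)
  have hsupp_t : ∀ d ∈ t.support, mb < d.degree := by
    intro d hd
    rw [mem_support_iff, ht, coeff_sub, hv, coeff_homogeneousComponent] at hd
    by_cases hdeg : d.degree = mb
    · rw [if_pos hdeg] at hd; simp at hd
    · rw [if_neg hdeg] at hd
      have hdb : d ∈ b.support := by
        rw [mem_support_iff]; intro h0; rw [h0] at hd; simp at hd
      exact lt_of_le_of_ne (hmb d hdb) (Ne.symm hdeg)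
  have hsupp_u : ∀ d ∈ u.support, ma ≤ d.degree := fun d hd => (supp_hc_deg a ma hd).ge
  have hdecomp : a * b = u * v + (u * t + s * b) := by
    rw [hs, ht]; ring
  rw [hdecomp, map_add, map_add]
  have h1 : homogeneousComponent (ma + mb) (u * v) = u * v := by
    have huv : u * v ∈ homogeneousSubmodule σ R (ma + mb) :=
      (homogeneousComponent_isHomogeneous ma a).mul (homogeneousComponent_isHomogeneous mb b)
    rw [homogeneousComponent_of_mem huv, if_pos rfl]
  have h2 : homogeneousComponent (ma + mb) (u * t) = 0 := hcZeroLow u t ma mb hsupp_u hsupp_t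
  have h3 : homogeneousComponent (ma + mb) (s * b) = 0 := by
    rw [mul_comm s b, show ma + mb = mb + ma by ring]
    exact hcZeroLow b s mb ma hmb hsupp_s
  rw [h1, h2, h3]; ring

lemma hc_extreme_top {a b : MvPolynomial σ R} (ma mb : ℕ)
    (hma : ∀ d ∈ a.support, d.degree ≤ ma) (hmb : ∀ d ∈ b.support, d.degree ≤ mb) :
    homogeneousComponent (ma + mb) (a * b) =
      homogeneousComponent ma a * homogeneousComponent mb b := by
  set u := homogeneousComponent ma a with hu
  set v := homogeneousComponent mb b with hv
  set s := a - u with hs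
  set t := b - v with ht
  have hsupp_s : ∀ d ∈ s.support, d.degree < ma := by
    intro d hd
    rw [mem_support_iff, hs, coeff_sub, hu, coeff_homogeneousComponent] at hd
    by_cases hdeg : d.degree = ma
    · rw [if_pos hdeg] at hd; simp at hd
    · rw [if_neg hdeg] at hd
      have hda : d ∈ a.support := by
        rw [mem_support_iff]; intro h0; rw [h0] at hd; simp at hd
      exact lt_of_le_of_ne (hma d hda) hdeg
  have hsupp_t : ∀ d ∈ t.support, d.degree < mb := by
    intro d hd
    rw [mem_support_iff, ht, coeff_sub, hv, coeff_homogeneousComponent] at hd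
    by_cases hdeg : d.degree = mb
    · rw [if_pos hdeg] at hd; simp at hd
    · rw [if_neg hdeg] at hd
      have hdb : d ∈ b.support := by
        rw [mem_support_iff]; intro h0; rw [h0] at hd; simp at hd
      exact lt_of_le_of_ne (hmb d hdb) hdeg
  have hsupp_u : ∀ d ∈ u.support, d.degree ≤ ma := fun d hd => (supp_hc_deg a ma hd).le
  have hdecomp : a * b = u * v + (u * t + s * b) := by
    rw [hs, ht]; ring
  rw [hdecomp, map_add, map_add]
  have h1 : homogeneousComponent (ma + mb) (u * v) = u * v := by
    have huv : u * v ∈ homogeneousSubmodule σ R (ma + mb) :=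
      (homogeneousComponent_isHomogeneous ma a).mul (homogeneousComponent_isHomogeneous mb b)
    rw [homogeneousComponent_of_mem huv, if_pos rfl]
  have h2 : homogeneousComponent (ma + mb) (u * t) = 0 := hcZeroHigh u t ma mb hsupp_u hsupp_t
  have h3 : homogeneousComponent (ma + mb) (s * b) = 0 := by
    rw [mul_comm s b, show ma + mb = mb + ma by ring]
    exact hcZeroHigh b s mb ma hmb hsupp_s
  rw [h1, h2, h3]; ring

/-- Factors of a nonzero homogeneous polynomial over a domain are homogeneous. -/
theorem isHomogeneous_of_mul {a b : MvPolynomial σ R} {n : ℕ}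
    (h : (a * b).IsHomogeneous n) (ha : a ≠ 0) (hb : b ≠ 0) :
    ∃ p q : ℕ, p + q = n ∧ a.IsHomogeneous p ∧ b.IsHomogeneous q := by
  classical
  have hDa : (a.support.image Finsupp.degree).Nonempty :=
    (Finset.image_nonempty).mpr (support_nonempty.mpr ha)
  have hDb : (b.support.image Finsupp.degree).Nonempty :=
    (Finset.image_nonempty).mpr (support_nonempty.mpr hb)
  set A' := (a.support.image Finsupp.degree).min' hDa with hA'
  set A := (a.support.image Finsupp.degree).max' hDa with hA
  set B' := (b.support.image Finsupp.degree).min' hDb with hB'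
  set B := (b.support.image Finsupp.degree).max' hDb with hB
  have haLow : ∀ d ∈ a.support, A' ≤ d.degree := fun d hd =>
    Finset.min'_le _ _ (Finset.mem_image_of_mem _ hd)
  have haHigh : ∀ d ∈ a.support, d.degree ≤ A := fun d hd =>
    Finset.le_max' _ _ (Finset.mem_image_of_mem _ hd)
  have hbLow : ∀ d ∈ b.support, B' ≤ d.degree := fun d hd =>
    Finset.min'_le _ _ (Finset.mem_image_of_mem _ hd)
  have hbHigh : ∀ d ∈ b.support, d.degree ≤ B := fun d hd =>
    Finset.le_max' _ _ (Finset.mem_image_of_mem _ hd)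
  -- extremal components nonzero
  have hcomp_ne : ∀ (k : ℕ), k ∈ a.support.image Finsupp.degree →
      homogeneousComponent k a ≠ 0 := by
    intro k hk
    obtain ⟨d, hd, hdeg⟩ := Finset.mem_image.mp hk
    intro h0
    have := coeff_homogeneousComponent k a d
    rw [h0, if_pos hdeg] at this
    rw [mem_support_iff] at hd
    exact hd (by simpa using this.symm)
  have hcomp_ne_b : ∀ (k : ℕ), k ∈ b.support.image Finsupp.degree →
      homogeneousComponent k b ≠ 0 := by
    intro k hk
    obtain ⟨d, hd, hdeg⟩ := Finset.mem_image.mp hk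
    intro h0
    have := coeff_homogeneousComponent k b d
    rw [h0, if_pos hdeg] at this
    rw [mem_support_iff] at hd
    exact hd (by simpa using this.symm)
  have hf : a * b ∈ homogeneousSubmodule σ R n := (mem_homogeneousSubmodule _ _).mpr h
  have hforce : ∀ k : ℕ, homogeneousComponent k (a * b) ≠ 0 → k = n := by
    intro k hk
    by_contra hne
    rw [homogeneousComponent_of_mem hf, if_neg hne] at hk
    exact hk rfl
  have hlow_ne : homogeneousComponent (A' + B') (a * b) ≠ 0 := by
    rw [hc_extreme A' B' haLow hbLow]
    exact mul_ne_zero (hcomp_ne A' (Finset.min'_mem _ _)) (hcomp_ne_b B' (Finset.min'_mem _ _))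
  have hhigh_ne : homogeneousComponent (A + B) (a * b) ≠ 0 := by
    rw [hc_extreme_top A B haHigh hbHigh]
    exact mul_ne_zero (hcomp_ne A (Finset.max'_mem _ _)) (hcomp_ne_b B (Finset.max'_mem _ _))
  have h1 := hforce _ hlow_ne
  have h2 := hforce _ hhigh_ne
  have hAle : A' ≤ A := Finset.min'_le _ _ (Finset.max'_mem _ _)
  have hBle : B' ≤ B := Finset.min'_le _ _ (Finset.max'_mem _ _)
  have hAA : A' = A := by omega
  have hBB : B' = B := by omega
  refine ⟨A, B, h2, ?_, ?_⟩
  · have : a = homogeneousComponent A a := by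
      ext d
      rw [coeff_homogeneousComponent]
      by_cases hd : d ∈ a.support
      · rw [if_pos (le_antisymm (haHigh d hd) (hAA ▸ haLow d hd))]
      · rw [notMem_support_iff] at hd
        rw [hd]; simp
    rw [this]
    exact homogeneousComponent_isHomogeneous A a
  · have : b = homogeneousComponent B b := by
      ext d
      rw [coeff_homogeneousComponent]
      by_cases hd : d ∈ b.support
      · rw [if_pos (le_antisymm (hbHigh d hd) (hBB ▸ hbLow d hd))]
      · rw [notMem_support_iff] at hd
        rw [hd]; simp
    rw [this]
    exact homogeneousComponent_isHomogeneous B b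

end Alg

/-! ### The multiplication bilinear maps and the closed cone -/

noncomputable def Bmul (d₁ d₂ D : ℕ) (hsum : d₁ + d₂ = D) :
    Vd d₁ →ₗ[ℂ] Vd d₂ →ₗ[ℂ] Vd D :=
  LinearMap.mk₂ ℂ
    (fun g h => ⟨(g : MvPolynomial (Fin 3) ℂ) * h,
      (mem_homogeneousSubmodule _ _).mpr
        (hsum ▸ (((mem_homogeneousSubmodule _ _).mp g.2).mul
          ((mem_homogeneousSubmodule _ _).mp h.2)))⟩)
    (by intro m₁ m₂ n; apply Subtype.ext; simp [add_mul])
    (by intro c m n; apply Subtype.ext; simp [smul_mul_assoc])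
    (by intro m n₁ n₂; apply Subtype.ext; simp [mul_add])
    (by intro c m n; apply Subtype.ext; simp [mul_smul_comm])

@[simp] lemma Bmul_coe (d₁ d₂ D : ℕ) (hsum : d₁ + d₂ = D) (g : Vd d₁) (h : Vd d₂) :
    ((Bmul d₁ d₂ D hsum g h : Vd D) : MvPolynomial (Fin 3) ℂ)
      = (g : MvPolynomial (Fin 3) ℂ) * h := rfl

lemma isClosed_image_Bmul (d₁ d₂ D : ℕ) (hsum : d₁ + d₂ = D) :
    IsClosed {p : Vd D | ∃ (g : Vd d₁) (h : Vd d₂), Bmul d₁ d₂ D hsum g h = p} := by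
  set e₁ := modelEquiv d₁
  set e₂ := modelEquiv d₂
  set e := modelEquiv D
  haveI : Nontrivial (Fin (Module.finrank ℂ (Vd d₁)) → ℂ) :=
    (e₁.symm.toLinearEquiv.toEquiv).nontrivial
  haveI : Nontrivial (Fin (Module.finrank ℂ (Vd d₂)) → ℂ) :=
    (e₂.symm.toLinearEquiv.toEquiv).nontrivial
  set B' : (Fin (Module.finrank ℂ (Vd d₁)) → ℂ) →ₗ[ℂ] (Fin (Module.finrank ℂ (Vd d₂)) → ℂ)
      →ₗ[ℂ] (Fin (Module.finrank ℂ (Vd D)) → ℂ) :=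
    LinearMap.mk₂ ℂ (fun x y => e (Bmul d₁ d₂ D hsum (e₁.symm x) (e₂.symm y)))
      (by intro m₁ m₂ n; simp [map_add, LinearMap.add_apply])
      (by intro c m n; simp [map_smul, LinearMap.smul_apply])
      (by intro m n₁ n₂; simp [map_add])
      (by intro c m n; simp [map_smul])
    with hB'def
  have hB' : ∀ x y, B' x y = 0 → x = 0 ∨ y = 0 := by
    intro x y h0
    have h1 : Bmul d₁ d₂ D hsum (e₁.symm x) (e₂.symm y) = 0 := by
      apply e.injective
      simpa [hB'def] using h0
    have h2 : ((e₁.symm x : Vd d₁) : MvPolynomial (Fin 3) ℂ)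
        * ((e₂.symm y : Vd d₂) : MvPolynomial (Fin 3) ℂ) = 0 := by
      have := congrArg (Subtype.val) h1
      simpa using this
    rcases mul_eq_zero.mp h2 with h3 | h3
    · left
      have : e₁.symm x = 0 := by rwa [← ZeroMemClass.coe_eq_zero]
      have := congrArg e₁ this
      simpa using this
    · right
      have : e₂.symm y = 0 := by rwa [← ZeroMemClass.coe_eq_zero]
      have := congrArg e₂ this
      simpa using this
  have hset : {p : Vd D | ∃ (g : Vd d₁) (h : Vd d₂), Bmul d₁ d₂ D hsum g h = p}
      = ⇑e ⁻¹' {z | ∃ x y, B' x y = z} := by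
    ext p
    simp only [Set.mem_setOf_eq, Set.mem_preimage]
    constructor
    · rintro ⟨g, h, rfl⟩
      exact ⟨e₁ g, e₂ h, by simp [hB'def]⟩
    · rintro ⟨x, y, hxy⟩
      refine ⟨e₁.symm x, e₂.symm y, e.injective ?_⟩
      simpa [hB'def] using hxy
  rw [hset]
  exact (closed_image_bilinear B' hB').preimage e.continuous

lemma isClosed_cone (d : ℕ) (hd : 2 ≤ d) :
    IsClosed {p : Vd d | ∃ (g h : MvPolynomial (Fin 3) ℂ) (d₁ d₂ : ℕ),
      0 < d₁ ∧ 0 < d₂ ∧ g.IsHomogeneous d₁ ∧ h.IsHomogeneous d₂ ∧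
      (p : MvPolynomial (Fin 3) ℂ) = g * h} := by
  have hset : {p : Vd d | ∃ (g h : MvPolynomial (Fin 3) ℂ) (d₁ d₂ : ℕ),
      0 < d₁ ∧ 0 < d₂ ∧ g.IsHomogeneous d₁ ∧ h.IsHomogeneous d₂ ∧
      (p : MvPolynomial (Fin 3) ℂ) = g * h}
      = ⋃ d₁ ∈ Finset.Ico 1 d, {p : Vd d | ∃ (g h : MvPolynomial (Fin 3) ℂ),
          g.IsHomogeneous d₁ ∧ h.IsHomogeneous (d - d₁) ∧
          (p : MvPolynomial (Fin 3) ℂ) = g * h} := by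
    ext p
    simp only [Set.mem_setOf_eq, Set.mem_iUnion, Finset.mem_Ico, exists_prop]
    constructor
    · rintro ⟨g, h, d₁, d₂, h1, h2, hg, hh, hfact⟩
      by_cases hp : (p : MvPolynomial (Fin 3) ℂ) = 0
      · refine ⟨1, ⟨le_refl 1, by omega⟩, 0, 0, isHomogeneous_zero _ _ _,
          isHomogeneous_zero _ _ _, by rw [hp, mul_zero]⟩
      · have hgh : ((g * h : MvPolynomial (Fin 3) ℂ)).IsHomogeneous (d₁ + d₂) := hg.mul hh
        have hpd : (p : MvPolynomial (Fin 3) ℂ).IsHomogeneous d :=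
          (mem_homogeneousSubmodule _ _).mp p.2
        have hdeq : d₁ + d₂ = d := by
          have := (hfact ▸ hpd : ((g*h : MvPolynomial (Fin 3) ℂ)).IsHomogeneous d)
          exact hgh.inj_right this (hfact ▸ hp)
        refine ⟨d₁, ⟨h1, by omega⟩, g, h, hg, ?_, hfact⟩
        have : d - d₁ = d₂ := by omega
        rwa [this]
    · rintro ⟨d₁, ⟨h1, h2⟩, g, h, hg, hh, hfact⟩
      exact ⟨g, h, d₁, d - d₁, h1, by omega, hg, hh, hfact⟩
  rw [hset]
  apply Set.Finite.isClosed_biUnion (Finset.Ico 1 d).finite_toSet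
  intro d₁ hd₁
  rw [Finset.mem_coe, Finset.mem_Ico] at hd₁
  have hsum : d₁ + (d - d₁) = d := by omega
  have : {p : Vd d | ∃ (g h : MvPolynomial (Fin 3) ℂ),
      g.IsHomogeneous d₁ ∧ h.IsHomogeneous (d - d₁) ∧
      (p : MvPolynomial (Fin 3) ℂ) = g * h}
      = {p : Vd d | ∃ (g : Vd d₁) (h : Vd (d - d₁)), Bmul d₁ (d - d₁) d hsum g h = p} := by
    ext p
    simp only [Set.mem_setOf_eq]
    constructor
    · rintro ⟨g, h, hg, hh, hfact⟩
      exact ⟨⟨g, (mem_homogeneousSubmodule _ _).mpr hg⟩,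
        ⟨h, (mem_homogeneousSubmodule _ _).mpr hh⟩, Subtype.ext hfact.symm⟩
    · rintro ⟨g, h, rfl⟩
      exact ⟨g, h, (mem_homogeneousSubmodule _ _).mp g.2,
        (mem_homogeneousSubmodule _ _).mp h.2, rfl⟩
  rw [this]
  exact isClosed_image_Bmul d₁ (d - d₁) d hsum

/-! ### Units and irreducibility facts -/

lemma not_isUnit_of_pos_degree {g : MvPolynomial (Fin 3) ℂ} {k : ℕ}
    (hg : g.IsHomogeneous k) (hk : 0 < k) (hg0 : g ≠ 0) : ¬ IsUnit g := by
  intro hu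
  obtain ⟨w, hw⟩ := hu.exists_right_inv
  have h1 : ((g * w : MvPolynomial (Fin 3) ℂ)).IsHomogeneous 0 := by
    rw [hw]; exact isHomogeneous_one _ _
  have hw0 : w ≠ 0 := by
    rintro rfl
    rw [mul_zero] at hw
    exact zero_ne_one hw
  obtain ⟨p, q, hpq, hgp, _⟩ := isHomogeneous_of_mul h1 hg0 hw0
  have hpk : p = k := hgp.inj_right hg hg0
  omega

lemma isUnit_of_homog_zero {g : MvPolynomial (Fin 3) ℂ}
    (hg : g.IsHomogeneous 0) (hg0 : g ≠ 0) : IsUnit g := by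
  have hmem : g ∈ homogeneousSubmodule (Fin 3) ℂ 0 := (mem_homogeneousSubmodule _ _).mpr hg
  have h1 : homogeneousComponent 0 g = g := by
    rw [homogeneousComponent_of_mem hmem, if_pos rfl]
  have h2 : g = C (coeff 0 g) := by conv_lhs => rw [← h1, homogeneousComponent_zero]
  have hc : coeff 0 g ≠ 0 := by
    intro h0
    rw [h0, map_zero] at h2
    exact hg0 h2
  rw [h2]
  exact (Ne.isUnit hc).map (C : ℂ →+* MvPolynomial (Fin 3) ℂ)

end AuxStmt3

open AuxStmt3 in
/-- In `ℙ(V_d)` (`d ≥ 2`), the set of classes of degree-`d` homogeneous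
polynomials that factor into two homogeneous polynomials of positive degrees is
closed; consequently the set of classes of irreducible ones is open. -/
theorem stmt_3 (d : ℕ) (hd : 2 ≤ d) :
    IsClosed {x : Projectivization ℂ (Vd d) |
        ∃ (f : MvPolynomial (Fin 3) ℂ) (hfd : f ∈ homogeneousSubmodule (Fin 3) ℂ d)
          (hf : (⟨f, hfd⟩ : Vd d) ≠ 0),
          Projectivization.mk ℂ (⟨f, hfd⟩ : Vd d) hf = x ∧
          ∃ (g h : MvPolynomial (Fin 3) ℂ) (d₁ d₂ : ℕ),
            0 < d₁ ∧ 0 < d₂ ∧ g.IsHomogeneous d₁ ∧ h.IsHomogeneous d₂ ∧ f = g * h} ∧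
    IsOpen {x : Projectivization ℂ (Vd d) |
        ∃ (f : MvPolynomial (Fin 3) ℂ) (hfd : f ∈ homogeneousSubmodule (Fin 3) ℂ d)
          (hf : (⟨f, hfd⟩ : Vd d) ≠ 0),
          Projectivization.mk ℂ (⟨f, hfd⟩ : Vd d) hf = x ∧ Irreducible f} := by
  classical
  set S : Set (Projectivization ℂ (Vd d)) := {x |
      ∃ (f : MvPolynomial (Fin 3) ℂ) (hfd : f ∈ homogeneousSubmodule (Fin 3) ℂ d)
        (hf : (⟨f, hfd⟩ : Vd d) ≠ 0),
        Projectivization.mk ℂ (⟨f, hfd⟩ : Vd d) hf = x ∧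
        ∃ (g h : MvPolynomial (Fin 3) ℂ) (d₁ d₂ : ℕ),
          0 < d₁ ∧ 0 < d₂ ∧ g.IsHomogeneous d₁ ∧ h.IsHomogeneous d₂ ∧ f = g * h} with hSdef
  set I : Set (Projectivization ℂ (Vd d)) := {x |
      ∃ (f : MvPolynomial (Fin 3) ℂ) (hfd : f ∈ homogeneousSubmodule (Fin 3) ℂ d)
        (hf : (⟨f, hfd⟩ : Vd d) ≠ 0),
        Projectivization.mk ℂ (⟨f, hfd⟩ : Vd d) hf = x ∧ Irreducible f} with hIdef
  -- the cone of reducible polynomials in `Vd d`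
  set Cone : Set (Vd d) := {p | ∃ (g h : MvPolynomial (Fin 3) ℂ) (d₁ d₂ : ℕ),
      0 < d₁ ∧ 0 < d₂ ∧ g.IsHomogeneous d₁ ∧ h.IsHomogeneous d₂ ∧
      (p : MvPolynomial (Fin 3) ℂ) = g * h} with hConedef
  -- the preimage of S under the projectivization map is the nonzero part of the cone
  have hpre : Projectivization.mk' ℂ ⁻¹' S = Subtype.val ⁻¹' Cone := by
    ext w
    obtain ⟨v, hv⟩ := w
    simp only [Set.mem_preimage, hSdef, hConedef, Set.mem_setOf_eq, Projectivization.mk'_eq_mk]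
    constructor
    · rintro ⟨f, hfd, hf, heq, g, h, d₁, d₂, h1, h2, hg, hh, hfact⟩
      rw [Projectivization.mk_eq_mk_iff] at heq
      obtain ⟨a, ha⟩ := heq
      have haval : (a : ℂ) • (v : MvPolynomial (Fin 3) ℂ) = f := by
        have := congrArg (Subtype.val) ha
        rw [Units.smul_def, Submodule.coe_smul] at this
        exact this
      have hvval : (v : MvPolynomial (Fin 3) ℂ) = ((a : ℂ))⁻¹ • (g * h) := by
        rw [← hfact, ← haval, smul_smul, inv_mul_cancel₀ a.ne_zero, one_smul]
      refine ⟨C ((a : ℂ))⁻¹ * g, h, d₁, d₂, h1, h2, ?_, hh, ?_⟩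
      · have := (isHomogeneous_C (Fin 3) ((a : ℂ))⁻¹).mul hg
        rwa [zero_add] at this
      · rw [hvval, smul_eq_C_mul, mul_assoc]
    · rintro ⟨g, h, d₁, d₂, h1, h2, hg, hh, hfact⟩
      exact ⟨(v : MvPolynomial (Fin 3) ℂ), v.2, hv, rfl, g, h, d₁, d₂, h1, h2, hg, hh, hfact⟩
  have hSclosed : IsClosed S := by
    constructor
    apply (isOpen_coinduced (f := Projectivization.mk' ℂ)).mpr
    rw [Set.preimage_compl, hpre]
    exact (((isClosed_cone d hd).preimage continuous_subtype_val)).isOpen_compl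
  have hIcompl : I = Sᶜ := by
    ext x
    induction x using Projectivization.ind with
    | h v hv =>
      have hvne : (v : MvPolynomial (Fin 3) ℂ) ≠ 0 :=
        fun h0 => hv (ZeroMemClass.coe_eq_zero.mp h0)
      have hvhom : (v : MvPolynomial (Fin 3) ℂ).IsHomogeneous d :=
        (mem_homogeneousSubmodule _ _).mp v.2
      simp only [hIdef, hSdef, Set.mem_compl_iff, Set.mem_setOf_eq]
      constructor
      · rintro ⟨f, hfd, hf, heq, hirr⟩ ⟨f', hfd', hf', heq', g, h, d₁, d₂, h1, h2, hg, hh, hfact⟩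
        have heq2 : Projectivization.mk ℂ (⟨f, hfd⟩ : Vd d) hf
            = Projectivization.mk ℂ (⟨f', hfd'⟩ : Vd d) hf' := heq.trans heq'.symm
        rw [Projectivization.mk_eq_mk_iff] at heq2
        obtain ⟨a, ha⟩ := heq2
        have haval : (a : ℂ) • f' = f := by
          have := congrArg (Subtype.val) ha
          rw [Units.smul_def, Submodule.coe_smul] at this
          exact this
        have hffact : f = (C ((a : ℂ)) * g) * h := by
          rw [← haval, hfact, smul_eq_C_mul, mul_assoc]
        have hfne : f ≠ 0 := fun h0 => hf (ZeroMemClass.coe_eq_zero.mp h0)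
        have hgne : (C ((a : ℂ)) * g) ≠ 0 := by
          intro h0; rw [hffact, h0, zero_mul] at hfne; exact hfne rfl
        have hhne : h ≠ 0 := by
          intro h0; rw [hffact, h0, mul_zero] at hfne; exact hfne rfl
        have hg0 : g ≠ 0 := by
          intro h0; rw [h0, mul_zero] at hgne; exact hgne rfl
        rcases hirr.isUnit_or_isUnit hffact with hu | hu
        · have hCa : IsUnit (C ((a : ℂ)) : MvPolynomial (Fin 3) ℂ) :=
            a.isUnit.map (C : ℂ →+* MvPolynomial (Fin 3) ℂ)
          have hug : IsUnit g := by
            obtain ⟨b, hb⟩ := hCa.exists_left_inv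
            have : g = b * (C ((a : ℂ)) * g) := by rw [← mul_assoc, hb, one_mul]
            rw [this]
            exact (IsUnit.of_mul_eq_one _ hb).mul hu
          exact not_isUnit_of_pos_degree hg h1 hg0 hug
        · exact not_isUnit_of_pos_degree hh h2 hhne hu
      · intro hnot
        refine ⟨(v : MvPolynomial (Fin 3) ℂ), v.2, hv, rfl, ?_⟩
        rw [irreducible_iff]
        constructor
        · exact not_isUnit_of_pos_degree hvhom (by omega) hvne
        · intro a b hab
          by_contra hcon
          push_neg at hcon
          obtain ⟨hua, hub⟩ := hcon
          have ha0 : a ≠ 0 := by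
            intro h0; rw [h0, zero_mul] at hab; exact hvne hab
          have hb0 : b ≠ 0 := by
            intro h0; rw [h0, mul_zero] at hab; exact hvne hab
          have hmul : ((a * b : MvPolynomial (Fin 3) ℂ)).IsHomogeneous d := hab ▸ hvhom
          obtain ⟨p, q, hpq, hap, hbq⟩ := isHomogeneous_of_mul hmul ha0 hb0
          have hp0 : 0 < p := by
            rcases Nat.eq_zero_or_pos p with h0 | h0
            · exact absurd (isUnit_of_homog_zero (h0 ▸ hap) ha0) hua
            · exact h0
          have hq0 : 0 < q := by
            rcases Nat.eq_zero_or_pos q with h0 | h0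
            · exact absurd (isUnit_of_homog_zero (h0 ▸ hbq) hb0) hub
            · exact h0
          exact hnot ⟨(v : MvPolynomial (Fin 3) ℂ), v.2, hv, rfl, a, b, p, q, hp0, hq0,
            hap, hbq, hab⟩
  exact ⟨hSclosed, hIcompl ▸ hSclosed.isOpen_compl⟩
end

section
/- Let f ∈ ℂ[z] be a polynomial of degree n, let z₀ be a root of f of multiplicity k, and let r > 0 be such that z₀ is the only root of f in the closed disk of radius r about z₀. Then there exists δ > 0 such that every polynomial g ∈ ℂ[z] of degree exactly n, each of whose coefficients differs from the corresponding coefficient of f by less than δ, has exactly k roots counted with multiplicity in the open disk of radius r about z₀. -/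
open Polynomial Filter Metric Finset

/-- If `z₀` is a root of `f` of multiplicity `k` and the only root of `f` in the
closed disk of radius `r` about `z₀`, then every polynomial `g` of the same degree
whose coefficients are all within `δ` of those of `f` (for suitable `δ > 0`) has
exactly `k` roots, counted with multiplicity, in the open disk of radius `r`
about `z₀`. -/
theorem stmt_5 (f : Polynomial ℂ) (n : ℕ) (hf : f.degree = (n : ℕ))
    (z₀ : ℂ) (hz₀ : f.IsRoot z₀) (k : ℕ) (hk : f.rootMultiplicity z₀ = k)
    (r : ℝ) (hr : 0 < r)
    (honly : ∀ z : ℂ, f.IsRoot z → ‖z - z₀‖ ≤ r → z = z₀) :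
    ∃ δ > (0 : ℝ), ∀ g : Polynomial ℂ, g.degree = (n : ℕ) →
      (∀ j : ℕ, ‖f.coeff j - g.coeff j‖ < δ) →
      Multiset.card (g.roots.filter (fun z => ‖z - z₀‖ < r)) = k := by
  classical
  by_contra hcon
  push_neg at hcon
  have hfdeg : f.natDegree = n := natDegree_eq_of_degree_eq_some hf
  have hf0 : f ≠ 0 := fun h => by simp [h] at hf
  set c : ℂ := f.coeff n with hc_def
  have hc : c ≠ 0 := by
    have h1 : f.leadingCoeff ≠ 0 := leadingCoeff_ne_zero.mpr hf0
    simpa [leadingCoeff, hfdeg, hc_def] using h1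
  have hcpos : (0:ℝ) < ‖c‖ := by
    simpa using (norm_pos_iff.mpr hc)
  set ε : ℕ → ℝ := fun m => min (1/(m+1)) (‖c‖ / 2) with hε_def
  have hεpos : ∀ m, 0 < ε m := by
    intro m
    apply lt_min (by positivity) (by positivity)
  have hmain : ∀ m : ℕ, ∃ g : ℂ[X], g.degree = (n:ℕ) ∧
      (∀ j, ‖f.coeff j - g.coeff j‖ < ε m) ∧
      Multiset.card (g.roots.filter fun z => ‖z - z₀‖ < r) ≠ k :=
    fun m => hcon (ε m) (hεpos m)
  choose g hgdeg hgcoeff hgcard using hmain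
  have hg0 : ∀ m, g m ≠ 0 := by
    intro m h
    have := hgdeg m
    rw [h] at this
    simp at this
  have hgnat : ∀ m, (g m).natDegree = n := fun m => natDegree_eq_of_degree_eq_some (hgdeg m)
  have hsplits : ∀ m, Splits (g m) := fun m => IsAlgClosed.splits _
  have hcardroots : ∀ m, Multiset.card (g m).roots = n :=
    fun m => (splits_iff_card_roots.mp (hsplits m)).trans (hgnat m)
  have hlen : ∀ m, ((g m).roots.toList).length = n :=
    fun m => (Multiset.length_toList _).trans (hcardroots m)
  set v : ℕ → Fin n → ℂ := fun m i => ((g m).roots.toList).get (Fin.cast (hlen m).symm i)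
    with hv_def
  have hofn : ∀ m, List.ofFn (v m) = (g m).roots.toList := by
    intro m
    apply List.ext_getElem (by simp [hlen m])
    intro i h1 h2
    simp [hv_def, List.getElem_ofFn, List.get_eq_getElem]
  have hroots_eq : ∀ m, (g m).roots = Multiset.map (v m) Finset.univ.val := fun m => by
    rw [Fin.univ_val_map, hofn m, Multiset.coe_toList]
  have hglead : ∀ m, (g m).leadingCoeff = (g m).coeff n := by
    intro m; rw [leadingCoeff, hgnat m]
  -- bounds
  have hgcoeff' : ∀ m j, ‖f.coeff j - (g m).coeff j‖ < ε m := by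
    intro m j; exact hgcoeff m j
  have hcoeff_ub : ∀ m j, ‖(g m).coeff j‖ ≤ ‖f.coeff j‖ + ‖c‖ := by
    intro m j
    have h1 : ‖f.coeff j - (g m).coeff j‖ ≤ ‖c‖ := by
      refine le_trans (hgcoeff' m j).le (le_trans (min_le_right _ _) ?_)
      linarith
    calc ‖(g m).coeff j‖ = ‖f.coeff j - (f.coeff j - (g m).coeff j)‖ := by ring_nf
      _ ≤ ‖f.coeff j‖ + ‖f.coeff j - (g m).coeff j‖ := norm_sub_le _ _
      _ ≤ ‖f.coeff j‖ + ‖c‖ := by linarith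
  have hlead_lb : ∀ m, ‖c‖/2 ≤ ‖(g m).coeff n‖ := by
    intro m
    have h1 : ‖f.coeff n - (g m).coeff n‖ < ‖c‖/2 := by
      refine lt_of_lt_of_le (hgcoeff' m n) (le_trans (min_le_right _ _) ?_)
      exact le_rfl
    have h2 := norm_sub_norm_le c ((g m).coeff n)
    linarith
  -- Cauchy bound, uniform over m
  set B : NNReal := (Finset.range n).sup (fun j => ‖f.coeff j‖₊ + ‖c‖₊) with hB_def
  have hc2 : (0 : NNReal) < ‖c‖₊/2 := by
    have : ‖c‖₊ ≠ 0 := by simpa using hc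
    positivity
  have hcb : ∀ m, cauchyBound (g m) ≤ B / (‖c‖₊/2) + 1 := by
    intro m
    rw [cauchyBound, hgnat m, hglead m]
    gcongr
    · apply Finset.sup_mono_fun
      intro j _
      have := hcoeff_ub m j
      rw [← NNReal.coe_le_coe]
      push_cast
      simpa using this
    · have := hlead_lb m
      rw [← NNReal.coe_le_coe]
      push_cast
      simpa using this
  set Rr : ℝ := ((B / (‖c‖₊/2) + 1 : NNReal) : ℝ) with hRr_def
  have hvbound : ∀ m i, ‖v m i‖ ≤ Rr := by
    intro m i
    have hmem : v m i ∈ (g m).roots := by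
      rw [hroots_eq m]
      exact Multiset.mem_map_of_mem _ (Finset.mem_univ i)
    have hroot : (g m).IsRoot (v m i) := isRoot_of_mem_roots hmem
    have h1 : ‖v m i‖₊ < cauchyBound (g m) := hroot.norm_lt_cauchyBound (hg0 m)
    have h2 : ‖v m i‖₊ ≤ B / (‖c‖₊/2) + 1 := le_trans h1.le (hcb m)
    exact_mod_cast h2
  set R2 : ℝ := max Rr (‖f.coeff n‖ + ‖c‖) with hR2_def
  set u : ℕ → (Fin n → ℂ) × ℂ := fun m => (v m, (g m).coeff n) with hu_def
  have humem : ∀ m, u m ∈ closedBall (0 : (Fin n → ℂ) × ℂ) R2 := by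
    intro m
    rw [mem_closedBall_zero_iff, Prod.norm_def]
    apply max_le
    · refine le_trans (pi_norm_le_iff_of_nonneg ?_ |>.mpr fun i => ?_) (le_max_left _ _)
      · exact NNReal.coe_nonneg _
      · exact hvbound m i
    · exact le_trans (hcoeff_ub m n) (le_max_right _ _)
  obtain ⟨p, -, φ, hφ, hto⟩ := tendsto_subseq_of_bounded (isBounded_closedBall) humem
  set ζ : Fin n → ℂ := p.1 with hζ_def
  set a : ℂ := p.2 with ha_def
  have hvt : ∀ i, Tendsto (fun m => v (φ m) i) atTop (nhds (ζ i)) := fun i =>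
    (((continuous_apply i).comp continuous_fst).tendsto p).comp hto
  have hat : Tendsto (fun m => (g (φ m)).coeff n) atTop (nhds a) :=
    (continuous_snd.tendsto p).comp hto
  -- convergence of coefficients
  have hcoefft : ∀ j, Tendsto (fun m => (g (φ m)).coeff j) atTop (nhds (f.coeff j)) := by
    intro j
    rw [tendsto_iff_dist_tendsto_zero]
    refine squeeze_zero (f := fun m : ℕ => dist ((g (φ m)).coeff j) (f.coeff j))
      (g := fun m : ℕ => 1/(m+1)) (fun m => dist_nonneg) (fun m => ?_) ?_
    · show dist ((g (φ m)).coeff j) (f.coeff j) ≤ 1 / (m + 1)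
      rw [dist_comm, dist_eq_norm]
      refine le_trans (hgcoeff' (φ m) j).le (le_trans (min_le_left _ _) ?_)
      have : (m : ℝ) + 1 ≤ (φ m : ℝ) + 1 := by
        have h3 : (m:ℝ) ≤ (φ m : ℝ) := by exact_mod_cast hφ.le_apply
        linarith
      apply one_div_le_one_div_of_le (by positivity) this
    · exact tendsto_one_div_add_atTop_nhds_zero_nat
  -- Vieta identities
  have hesymm : ∀ m j, j ≤ n → (g m).coeff j =
      (g m).coeff n * ((-1:ℂ)^(n-j) *
        ∑ t ∈ Finset.powersetCard (n-j) Finset.univ, ∏ i ∈ t, v m i) := by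
    intro m j hj
    have h1 := coeff_eq_esymm_roots_of_splits (hsplits m) (k := j) (by rw [hgnat m]; exact hj)
    rw [hgnat m, hglead m, hroots_eq m, Finset.esymm_map_val] at h1
    rw [h1]; ring
  have hlim : ∀ j, j ≤ n → f.coeff j =
      a * ((-1:ℂ)^(n-j) * ∑ t ∈ Finset.powersetCard (n-j) Finset.univ, ∏ i ∈ t, ζ i) := by
    intro j hj
    refine tendsto_nhds_unique (hcoefft j) ?_
    have h2 : Tendsto (fun m => (g (φ m)).coeff n * ((-1:ℂ)^(n-j) *
        ∑ t ∈ Finset.powersetCard (n-j) Finset.univ, ∏ i ∈ t, v (φ m) i)) atTop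
        (nhds (a * ((-1:ℂ)^(n-j) * ∑ t ∈ Finset.powersetCard (n-j) Finset.univ, ∏ i ∈ t, ζ i))) :=
      hat.mul (tendsto_const_nhds.mul (tendsto_finset_sum _ fun t _ =>
        tendsto_finset_prod _ fun i _ => hvt i))
    exact Tendsto.congr (fun m => (hesymm (φ m) j hj).symm) h2
  set F : ℂ[X] := C a * (Multiset.map (fun t => X - C t) (Multiset.map ζ Finset.univ.val)).prod
    with hF_def
  have hcards : Multiset.card (Multiset.map ζ Finset.univ.val) = n := by simp
  have hFcoeff : ∀ j, j ≤ n → F.coeff j =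
      a * ((-1:ℂ)^(n-j) * ∑ t ∈ Finset.powersetCard (n-j) Finset.univ, ∏ i ∈ t, ζ i) := by
    intro j hj
    rw [hF_def, coeff_C_mul,
      Multiset.prod_X_sub_C_coeff _ (by rw [hcards]; exact hj), hcards, Finset.esymm_map_val]
  have hFnat : F.natDegree ≤ n := by
    refine le_trans (natDegree_C_mul_le a _) ?_
    rw [natDegree_multiset_prod_X_sub_C_eq_card, hcards]
  have hfF : f = F := by
    ext j
    rcases le_or_gt j n with hj | hj
    · rw [hlim j hj, hFcoeff j hj]
    · rw [coeff_eq_zero_of_natDegree_lt (by rw [hfdeg]; exact hj),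
        coeff_eq_zero_of_natDegree_lt (lt_of_le_of_lt hFnat hj)]
  have ha0 : a ≠ 0 := by
    intro h
    apply hf0
    rw [hfF, hF_def, h]
    simp
  have hroots_f : f.roots = Multiset.map ζ Finset.univ.val := by
    rw [hfF, hF_def, roots_C_mul _ ha0, roots_multiset_prod_X_sub_C]
  have hk' : Multiset.card (Multiset.filter (fun i => z₀ = ζ i) Finset.univ.val) = k := by
    rw [← hk, ← count_roots, hroots_f, Multiset.count_map]
  have hdich : ∀ i : Fin n, z₀ = ζ i ∨ r < ‖ζ i - z₀‖ := by
    intro i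
    by_cases hzi : ‖ζ i - z₀‖ ≤ r
    · left
      refine (honly (ζ i) ?_ hzi).symm
      have hmem : ζ i ∈ f.roots := by
        rw [hroots_f]; exact Multiset.mem_map_of_mem _ (Finset.mem_univ i)
      exact isRoot_of_mem_roots hmem
    · right; exact lt_of_not_ge hzi
  have hev : ∀ᶠ m in atTop, ∀ i : Fin n,
      (‖v (φ m) i - z₀‖ < r ↔ z₀ = ζ i) := by
    rw [Filter.eventually_all]
    intro i
    have htv : Tendsto (fun m => ‖v (φ m) i - z₀‖) atTop
        (nhds (‖ζ i - z₀‖)) :=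
      (continuous_norm.tendsto _).comp ((hvt i).sub tendsto_const_nhds)
    rcases hdich i with h | h
    · have h0 : ‖ζ i - z₀‖ = 0 := by rw [← h]; simp
      rw [h0] at htv
      filter_upwards [htv.eventually_lt_const hr] with m hm
      simp [hm, h.symm]
    · filter_upwards [htv.eventually_const_lt h] with m hm
      constructor
      · intro h'; exact absurd hm (not_lt.mpr h'.le)
      · intro h'
        rw [← h'] at h
        simp at h
        linarith
  obtain ⟨m, hm⟩ := hev.exists
  apply hgcard (φ m)
  rw [hroots_eq (φ m), ← Multiset.countP_eq_card_filter, Multiset.countP_map,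
    ← Multiset.countP_eq_card_filter]
  rw [show (Multiset.countP (fun i => ‖v (φ m) i - z₀‖ < r) Finset.univ.val) =
      Multiset.countP (fun i => z₀ = ζ i) Finset.univ.val from ?_]
  · rw [Multiset.countP_eq_card_filter]; exact hk'
  · rw [Multiset.countP_eq_card_filter, Multiset.countP_eq_card_filter,
      Multiset.filter_congr (fun i _ => hm i)]
end
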